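/- The comultiplication preserves the α–α† exchange relation: for all p, p', k, l ∈ ι one has Δα p k * Δα⋆ p' l = (g p p' * (g k l)⁻¹) • (Δα⋆ p' l * Δα p k) in H₁ ⊗[ℂ] H₂. -/

import Mathlib

open scoped TensorProduct
open Function

set_option linter.unusedSectionVars false
set_option maxHeartbeats 1000000

namespace Stmt4Aux

variable {ι : Type*} [DecidableEq ι] {H : Type*} [Ring H] [Algebra ℂ H] [StarRing H]

noncomputable def sc (lam : ℂ) : H := star (algebraMap ℂ H lam)

lemma sc_comm (lam : ℂ) (x : H) : x * sc lam = sc lam * x := by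
  have h := Algebra.commutes lam (star x)
  have h2 := congrArg star h
  simpa [sc, star_mul] using h2

lemma sc_mul (a b : ℂ) : (sc a : H) * sc b = sc (a * b) := by
  rw [sc, sc, ← star_mul, ← map_mul, sc, mul_comm]

lemma sc_one : (sc 1 : H) = 1 := by simp [sc]

lemma star_smul' (c : ℂ) (x : H) : star (c • x) = star x * sc c := by
  rw [Algebra.smul_def, star_mul]; rfl

lemma star_mul_sc (c : ℂ) (x : H) : star (x * sc c) = c • star x := by
  rw [star_mul, sc, star_star, ← Algebra.smul_def]

lemma sc_cancel {c : ℂ} (hc : c ≠ 0) {x y : H} (h : x * sc c = y * sc c) : x = y := by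
  have h2 := congrArg (· * sc c⁻¹) h
  simpa [mul_assoc, sc_mul, mul_inv_cancel₀ hc, sc_one] using h2

lemma eigen_kill {q : ℂ} (hq1 : q ≠ 1) {x : H} (h : x * sc q = x) : x = 0 := by
  have h2 : q • star x = star x := by
    have := congrArg star h
    rwa [star_mul_sc] at this
  have h3 : (q - 1) • star x = 0 := by
    rw [sub_smul, one_smul, h2, sub_self]
  have h4 : star x = 0 := by
    have := congrArg ((q - 1)⁻¹ • ·) h3
    simpa [smul_smul, inv_mul_cancel₀ (sub_ne_zero.mpr hq1)] using this
  calc x = star (star x) := (star_star x).symm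
  _ = 0 := by rw [h4, star_zero]

lemma smul_cancel {c : ℂ} (hc : c ≠ 0) {x y : H} (h : c • x = c • y) : x = y := by
  have := congrArg (c⁻¹ • ·) h
  simpa [smul_smul, inv_mul_cancel₀ hc] using this

section Core

variable {q : ℂ} {g : ι → ι → ℂ} {α β : ι → ι → H} {f : ι → H}

/-- bundled hypotheses -/
structure Rel (q : ℂ) (g : ι → ι → ℂ) (α β : ι → ι → H) (f : ι → H) : Prop where
  hq : q ≠ 0
  hg : ∀ p p' : ι, g p p' = if p = p' then q else 1
  finA : ∀ p, (support (α p)).Finite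
  finB : ∀ p, (support (β p)).Finite
  h1 : ∀ p p' k l : ι, α p k * α p' l = α p' l * α p k
  h2 : ∀ p p' k l : ι, α p k * star (α p' l) = (g p p' * (g k l)⁻¹) • (star (α p' l) * α p k)
  h3 : ∀ p p' k l : ι, α p k * β p' l = (g k l)⁻¹ • (β p' l * α p k)
  h4 : ∀ p p' k l : ι, α p k * star (β p' l) = g p p' • (star (β p' l) * α p k)
  h5 : ∀ p p' k : ι, α p k * f p' = f p' * α p k
  h6 : ∀ p p' k : ι, α p k * star (f p') = g p p' • (star (f p') * α p k)
  h7 : ∀ p p' k l : ι, β p k * β p' l = β p' l * β p k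
  h8 : ∀ p p' k l : ι, β p k * star (β p' l) = (g p p' * g k l) • (star (β p' l) * β p k)
  h12 : ∀ p p' : ι, f p * star (f p') - g p p' • (star (f p') * f p)
        = (if p = p' then (1:ℂ) else 0) • (1 : H) - (∑ᶠ k, α p k * star (α p' k))
          + g p p' • ∑ᶠ k, star (β p' k) * β p k

variable (R : Rel q g α β f)
include R

lemma g_diag (p : ι) : g p p = q := by rw [R.hg]; simp

lemma g_off {p p' : ι} (h : p ≠ p') : g p p' = 1 := by rw [R.hg]; simp [h]

lemma g_ne (p p' : ι) : g p p' ≠ 0 := by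
  rw [R.hg]; split
  · exact R.hq
  · exact one_ne_zero

lemma g_symm (p p' : ι) : g p p' = g p' p := by
  rw [R.hg, R.hg]
  rcases eq_or_ne p p' with h | h
  · simp [h]
  · simp [h, h.symm]

lemma finAmul (p : ι) (Y : ι → H) : (support fun k => α p k * Y k).Finite :=
  (R.finA p).subset (fun k hk => by
    simp only [mem_support] at hk ⊢
    intro h0; exact hk (by rw [h0, zero_mul]))

lemma finBmul (p : ι) (Y : ι → H) : (support fun k => star (β p k) * Y k).Finite :=
  (R.finB p).subset (fun k hk => by
    simp only [mem_support] at hk ⊢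
    intro h0; exact hk (by rw [h0, star_zero, zero_mul]))

/-- probe extraction -/
lemma probe (X : ι → H) (hX : (support X).Finite) (w : ι) :
    ∑ᶠ k, (q * (g w k)⁻¹) • X k = q • (∑ᶠ k, X k) - (q - 1) • X w := by
  have key : ∀ k, (q * (g w k)⁻¹) • X k
      = q • X k - (if k = w then (q - 1) • X w else 0) := by
    intro k
    by_cases h : k = w
    · subst h
      rw [g_diag R, mul_inv_cancel₀ R.hq, if_pos rfl, ← sub_smul]
      norm_num
    · have hg1 : g w k = 1 := by rw [R.hg]; simp [Ne.symm h]
      rw [hg1, if_neg h, inv_one, mul_one, sub_zero]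
  rw [finsum_congr key, finsum_sub_distrib (hX.subset (by
        intro k hk
        simp only [mem_support] at hk ⊢
        intro h0; exact hk (by rw [h0, smul_zero])))
      ((Set.finite_singleton w).subset (by
        intro k hk
        simp only [mem_support] at hk
        by_contra hne
        exact hk (if_neg (by simpa using hne)))),
      smul_finsum' q hX, finsum_eq_single _ w (fun x hx => if_neg hx), if_pos rfl]

/-- inverse forms -/
lemma h3' (X Y m n : ι) : β Y n * α X m = (g m n) • (α X m * β Y n) := by
  rw [R.h3 X Y m n, smul_smul, mul_inv_cancel₀ (g_ne R m n), one_smul]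

lemma h4' (X Y m n : ι) : star (β Y n) * α X m = (g X Y)⁻¹ • (α X m * star (β Y n)) := by
  rw [R.h4 X Y m n, smul_smul, inv_mul_cancel₀ (g_ne R X Y), one_smul]

lemma h8' (X Y m n : ι) : star (β Y n) * β X m = (g X Y * g m n)⁻¹ • (β X m * star (β Y n)) := by
  rw [R.h8 X Y m n, smul_smul, inv_mul_cancel₀ (mul_ne_zero (g_ne R X Y) (g_ne R m n)), one_smul]

/-- star images -/
lemma R1 (X Y m n : ι) : β Y n * star (α X m) = star (α X m) * β Y n * sc (g X Y) := by
  have h := congrArg star (R.h4 X Y m n)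
  rw [star_mul, star_star, star_smul', star_mul, star_star] at h
  rw [h, mul_assoc]

lemma R2 (X Y m n : ι) : star (β Y n) * star (α X m)
    = star (α X m) * star (β Y n) * sc ((g m n)⁻¹) := by
  have h := congrArg star (R.h3 X Y m n)
  rw [star_mul, star_smul', star_mul] at h
  rw [h, mul_assoc]

lemma R7 (X Y m n : ι) : star (β X m) * star (β Y n) = star (β Y n) * star (β X m) := by
  have h := congrArg star (R.h7 X Y m n)
  rw [star_mul, star_mul] at h
  exact h.symm

/-- diagonal instance of h12 -/
lemma hA12diag (p : ι) : f p * star (f p) - q • (star (f p) * f p)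
    = 1 - (∑ᶠ k, α p k * star (α p k)) + q • ∑ᶠ k, star (β p k) * β p k := by
  have h := R.h12 p p
  rwa [if_pos rfl, one_smul, g_diag R] at h

omit R in
lemma star_finsum (Z : ι → H) (hZ : (support Z).Finite) :
    star (∑ᶠ k, Z k) = ∑ᶠ k, star (Z k) :=
  (starAddEquiv : H ≃+ H).toAddMonoidHom.map_finsum hZ

/-- starred diagonal h12 -/
lemma S12diag (p : ι) : f p * star (f p) - (star (f p) * f p) * sc q
    = 1 - (∑ᶠ k, α p k * star (α p k)) + (∑ᶠ k, star (β p k) * β p k) * sc q := by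
  have h := congrArg star (hA12diag R p)
  rw [star_sub, star_mul, star_star, star_smul', star_mul, star_star] at h
  rw [star_add, star_sub, star_one, star_smul'] at h
  rw [star_finsum (fun k => α p k * star (α p k)) (finAmul R p (fun k => star (α p k))),
      star_finsum (fun k => star (β p k) * β p k) (finBmul R p (fun k => β p k))] at h
  have e1 : ∀ k, star (α p k * star (α p k)) = α p k * star (α p k) := by
    intro k; rw [star_mul, star_star]
  have e2 : ∀ k, star (star (β p k) * β p k) = star (β p k) * β p k := by
    intro k; rw [star_mul, star_star]
  rw [finsum_congr e1, finsum_congr e2] at h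
  exact h

lemma keyAS (p w k : ι) : α p w * (α p k * star (α p k))
    = (q * (g w k)⁻¹) • (α p k * star (α p k) * α p w) := by
  calc α p w * (α p k * star (α p k)) = (α p w * α p k) * star (α p k) := (mul_assoc _ _ _).symm
  _ = (α p k * α p w) * star (α p k) := by rw [R.h1 p p w k]
  _ = α p k * (α p w * star (α p k)) := mul_assoc _ _ _
  _ = α p k * ((g p p * (g w k)⁻¹) • (star (α p k) * α p w)) := by rw [R.h2 p p w k]
  _ = (q * (g w k)⁻¹) • (α p k * star (α p k) * α p w) := by
      rw [g_diag R, mul_smul_comm, mul_assoc]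

lemma keyTB (p w k : ι) : α p w * (star (β p k) * β p k)
    = (q * (g w k)⁻¹) • (star (β p k) * β p k * α p w) := by
  calc α p w * (star (β p k) * β p k) = (α p w * star (β p k)) * β p k := (mul_assoc _ _ _).symm
  _ = (g p p • (star (β p k) * α p w)) * β p k := by rw [R.h4 p p w k]
  _ = q • (star (β p k) * (α p w * β p k)) := by rw [g_diag R, smul_mul_assoc, mul_assoc]
  _ = q • (star (β p k) * ((g w k)⁻¹ • (β p k * α p w))) := by rw [R.h3 p p w k]
  _ = (q * (g w k)⁻¹) • (star (β p k) * β p k * α p w) := by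
      rw [mul_smul_comm, smul_smul, ← mul_assoc]

omit R in
lemma fin_sub {A : ι → H} (hA : (support A).Finite) {Z : ι → H}
    (h : ∀ k, A k = 0 → Z k = 0) : (support Z).Finite :=
  hA.subset (fun k hk => by
    simp only [mem_support] at hk ⊢
    exact fun h0 => hk (h k h0))

lemma finX (p w : ι) : (support fun k => α p k * star (α p k) * α p w).Finite :=
  fin_sub (R.finA p) (fun k h0 => by rw [h0, zero_mul, zero_mul])

lemma finY (p w : ι) : (support fun k => star (β p k) * β p k * α p w).Finite :=
  fin_sub (R.finB p) (fun k h0 => by rw [h0, star_zero, zero_mul, zero_mul])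

lemma X2 (hq1 : q ≠ 1) (p w : ι) :
    α p w = α p w * star (α p w) * α p w - q • (star (β p w) * β p w * α p w) := by
  have hFa : α p w * f p = f p * α p w := R.h5 p p w
  have hGa : α p w * star (f p) = q • (star (f p) * α p w) := by
    have := R.h6 p p w; rwa [g_diag R] at this
  have main : α p w * (1 - (∑ᶠ k, α p k * star (α p k)) + q • ∑ᶠ k, star (β p k) * β p k)
      = q • ((1 - (∑ᶠ k, α p k * star (α p k)) + q • ∑ᶠ k, star (β p k) * β p k) * α p w) := by
    rw [← hA12diag R p, mul_sub, sub_mul, smul_sub]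
    congr 1
    · calc α p w * (f p * star (f p)) = (α p w * f p) * star (f p) := (mul_assoc _ _ _).symm
      _ = f p * (α p w * star (f p)) := by rw [hFa, mul_assoc]
      _ = f p * (q • (star (f p) * α p w)) := by rw [hGa]
      _ = q • (f p * star (f p) * α p w) := by rw [mul_smul_comm, mul_assoc]
    · calc α p w * (q • (star (f p) * f p))
          = q • (α p w * (star (f p) * f p)) := mul_smul_comm _ _ _
      _ = q • ((α p w * star (f p)) * f p) := by rw [mul_assoc]
      _ = q • ((q • (star (f p) * α p w)) * f p) := by rw [hGa]
      _ = q • (q • (star (f p) * (α p w * f p))) := by rw [smul_mul_assoc, mul_assoc]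
      _ = q • (q • (star (f p) * f p) * α p w) := by
          rw [hFa, ← mul_assoc, smul_mul_assoc]
  have ex1 : α p w * (1 - (∑ᶠ k, α p k * star (α p k)) + q • ∑ᶠ k, star (β p k) * β p k)
      = α p w - (q • (∑ᶠ k, α p k * star (α p k) * α p w)
          - (q-1) • (α p w * star (α p w) * α p w))
        + q • (q • (∑ᶠ k, star (β p k) * β p k * α p w)
          - (q-1) • (star (β p w) * β p w * α p w)) := by
    rw [mul_add, mul_sub, mul_one, mul_smul_comm,
        mul_finsum' _ _ (finAmul R p (fun k => star (α p k))),
        mul_finsum' _ _ (finBmul R p (fun k => β p k)),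
        finsum_congr (keyAS R p w), finsum_congr (keyTB R p w),
        probe R _ (finX R p w) w, probe R _ (finY R p w) w]
  have ex2 : (1 - (∑ᶠ k, α p k * star (α p k)) + q • ∑ᶠ k, star (β p k) * β p k) * α p w
      = α p w - (∑ᶠ k, α p k * star (α p k) * α p w)
        + q • (∑ᶠ k, star (β p k) * β p k * α p w) := by
    rw [add_mul, sub_mul, one_mul, smul_mul_assoc,
        finsum_mul' _ _ (finAmul R p (fun k => star (α p k))),
        finsum_mul' _ _ (finBmul R p (fun k => β p k))]
  have EQ := main
  rw [ex1, ex2] at EQ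
  have key2 : (q-1) • (α p w * star (α p w) * α p w
        - q • (star (β p w) * β p w * α p w) - α p w)
      = (α p w - (q • (∑ᶠ k, α p k * star (α p k) * α p w)
          - (q-1) • (α p w * star (α p w) * α p w))
        + q • (q • (∑ᶠ k, star (β p k) * β p k * α p w)
          - (q-1) • (star (β p w) * β p w * α p w)))
        - q • (α p w - (∑ᶠ k, α p k * star (α p k) * α p w)
          + q • (∑ᶠ k, star (β p k) * β p k * α p w)) := by
    module
  rw [EQ, sub_self] at key2
  have key3 := congrArg ((q-1)⁻¹ • ·) key2
  simp only [smul_smul, inv_mul_cancel₀ (sub_ne_zero.mpr hq1), one_smul, smul_zero] at key3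
  exact (sub_eq_zero.mp key3).symm

lemma X2s (hq1 : q ≠ 1) (p w : ι) :
    α p w = α p w * star (α p w) * α p w - star (β p w) * β p w * α p w * sc q := by
  have hFa : α p w * f p = f p * α p w := R.h5 p p w
  have hGa : α p w * star (f p) = q • (star (f p) * α p w) := by
    have := R.h6 p p w; rwa [g_diag R] at this
  have main : α p w * (1 - (∑ᶠ k, α p k * star (α p k))
        + (∑ᶠ k, star (β p k) * β p k) * sc q)
      = q • ((1 - (∑ᶠ k, α p k * star (α p k))
        + (∑ᶠ k, star (β p k) * β p k) * sc q) * α p w) := by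
    rw [← S12diag R p, mul_sub, sub_mul, smul_sub]
    congr 1
    · calc α p w * (f p * star (f p)) = (α p w * f p) * star (f p) := (mul_assoc _ _ _).symm
      _ = f p * (α p w * star (f p)) := by rw [hFa, mul_assoc]
      _ = f p * (q • (star (f p) * α p w)) := by rw [hGa]
      _ = q • (f p * star (f p) * α p w) := by rw [mul_smul_comm, mul_assoc]
    · calc α p w * (star (f p) * f p * sc q)
          = ((α p w * star (f p)) * f p) * sc q := by rw [← mul_assoc, ← mul_assoc]
      _ = ((q • (star (f p) * α p w)) * f p) * sc q := by rw [hGa]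
      _ = q • (star (f p) * (α p w * f p) * sc q) := by
          rw [smul_mul_assoc, smul_mul_assoc, mul_assoc (star (f p)) (α p w) (f p)]
      _ = q • (star (f p) * f p * α p w * sc q) := by rw [hFa, ← mul_assoc]
      _ = q • (star (f p) * f p * sc q * α p w) := by
          rw [mul_assoc, sc_comm, ← mul_assoc]
  have ex1 : α p w * (1 - (∑ᶠ k, α p k * star (α p k))
        + (∑ᶠ k, star (β p k) * β p k) * sc q)
      = α p w - (q • (∑ᶠ k, α p k * star (α p k) * α p w)
          - (q-1) • (α p w * star (α p w) * α p w))
        + (q • (∑ᶠ k, star (β p k) * β p k * α p w)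
          - (q-1) • (star (β p w) * β p w * α p w)) * sc q := by
    rw [mul_add, mul_sub, mul_one, ← mul_assoc,
        mul_finsum' _ _ (finAmul R p (fun k => star (α p k))),
        mul_finsum' _ _ (finBmul R p (fun k => β p k)),
        finsum_congr (keyAS R p w), finsum_congr (keyTB R p w),
        probe R _ (finX R p w) w, probe R _ (finY R p w) w]
  have ex2 : (1 - (∑ᶠ k, α p k * star (α p k))
        + (∑ᶠ k, star (β p k) * β p k) * sc q) * α p w
      = α p w - (∑ᶠ k, α p k * star (α p k) * α p w)
        + (∑ᶠ k, star (β p k) * β p k * α p w) * sc q := by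
    rw [add_mul, sub_mul, one_mul, mul_assoc, ← sc_comm, ← mul_assoc,
        finsum_mul' _ _ (finAmul R p (fun k => star (α p k))),
        finsum_mul' _ _ (finBmul R p (fun k => β p k))]
  have EQ := main
  rw [ex1, ex2] at EQ
  have escq : ∀ z : H, (q • (∑ᶠ k, star (β p k) * β p k * α p w)
      - (q-1) • z) * sc q
      = q • ((∑ᶠ k, star (β p k) * β p k * α p w) * sc q) - (q-1) • (z * sc q) := by
    intro z; rw [sub_mul, smul_mul_assoc, smul_mul_assoc]
  rw [escq] at EQ
  have key2 : (q-1) • (α p w * star (α p w) * α p w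
        - star (β p w) * β p w * α p w * sc q - α p w)
      = (α p w - (q • (∑ᶠ k, α p k * star (α p k) * α p w)
          - (q-1) • (α p w * star (α p w) * α p w))
        + (q • ((∑ᶠ k, star (β p k) * β p k * α p w) * sc q)
          - (q-1) • (star (β p w) * β p w * α p w * sc q)))
        - q • (α p w - (∑ᶠ k, α p k * star (α p k) * α p w)
          + (∑ᶠ k, star (β p k) * β p k * α p w) * sc q) := by
    module
  rw [EQ, sub_self] at key2
  have key3 := congrArg ((q-1)⁻¹ • ·) key2
  simp only [smul_smul, inv_mul_cancel₀ (sub_ne_zero.mpr hq1), one_smul, smul_zero] at key3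
  exact (sub_eq_zero.mp key3).symm

lemma NAs (hq1 : q ≠ 1) (p w : ι) :
    star (β p w) * β p w * α p w * sc q = q • (star (β p w) * β p w * α p w) := by
  have h := (X2 R hq1 p w).symm.trans (X2s R hq1 p w)
  exact (sub_right_inj.mp h).symm

lemma X2star (hq1 : q ≠ 1) (p w : ι) :
    star (α p w) = star (α p w) * (α p w * star (α p w))
      - star (α p w) * (star (β p w) * β p w) * sc q := by
  have h := congrArg star (X2 R hq1 p w)
  rw [star_sub, star_smul'] at h
  simp only [star_mul, star_star] at h
  simpa [mul_assoc] using h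

lemma X2starq (hq1 : q ≠ 1) (p w : ι) :
    star (α p w) = star (α p w) * (α p w * star (α p w))
      - q • (star (α p w) * (star (β p w) * β p w)) := by
  have h := congrArg star (X2s R hq1 p w)
  rw [star_sub, star_mul_sc] at h
  simp only [star_mul, star_star] at h
  simpa [mul_assoc] using h

lemma f1q (hq1 : q ≠ 1) (X m : ι) (z : H) :
    star (α X m) * z = star (α X m) * (α X m * star (α X m)) * z
      - q • (star (α X m) * (star (β X m) * β X m) * z) := by
  have h := congrArg (· * z) (X2starq R hq1 X m)
  simpa [sub_mul, smul_mul_assoc] using h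

lemma f1s (hq1 : q ≠ 1) (X m : ι) (z : H) :
    star (α X m) * z = star (α X m) * (α X m * star (α X m)) * z
      - (star (α X m) * (star (β X m) * β X m) * z) * sc q := by
  have h := congrArg (· * z) (X2star R hq1 X m)
  simp only [sub_mul] at h
  have e : (star (α X m) * (star (β X m) * β X m) * sc q) * z
      = (star (α X m) * (star (β X m) * β X m) * z) * sc q := by
    rw [mul_assoc, ← sc_comm, ← mul_assoc]
  rwa [e] at h

lemma vscq (hq1 : q ≠ 1) (X m : ι) (z : H) :
    (star (α X m) * (star (β X m) * β X m) * z) * sc q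
      = q • (star (α X m) * (star (β X m) * β X m) * z) := by
  have h := (f1s R hq1 X m z).symm.trans (f1q R hq1 X m z)
  exact (sub_right_inj.mp h)

lemma v_scd (hq1 : q ≠ 1) (X Y m : ι) (z : H) :
    (star (α X m) * (star (β X m) * β X m) * z) * sc (g X Y)
      = g X Y • (star (α X m) * (star (β X m) * β X m) * z) := by
  by_cases hXY : X = Y
  · subst hXY; rw [g_diag R]; exact vscq R hq1 X m z
  · rw [g_off R hXY, sc_one, mul_one, one_smul]

lemma Fm (hq1 : q ≠ 1) (X Y m n : ι) :
    star (α X m) * β Y n = g m n • ((star (α X m) * β Y n) * sc (g X Y)) := by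
  have w1 : β Y n * star (α X m) = (star (α X m) * β Y n) * sc (g X Y) := by
    rw [R1 R X Y m n, mul_assoc]
  have scmove : ∀ x y : H, (x * sc (g X Y)) * y = (x * y) * sc (g X Y) := by
    intro x y; rw [mul_assoc, ← sc_comm, ← mul_assoc]
  have hba : β Y n * α X m = g m n • (α X m * β Y n) := h3' R X Y m n
  have hbt : β Y n * star (β X m) = (g X Y * g m n) • (star (β X m) * β Y n) := by
    have h := R.h8 Y X n m
    rwa [g_symm R Y X, g_symm R n m] at h
  have hbb : β Y n * β X m = β X m * β Y n := R.h7 Y X n m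
  have P1 : β Y n * (star (α X m) * (α X m * star (α X m)))
      = g m n • ((star (α X m) * (α X m * star (α X m)) * β Y n) * sc (g X Y) * sc (g X Y)) := by
    calc β Y n * (star (α X m) * (α X m * star (α X m)))
        = (β Y n * star (α X m)) * (α X m * star (α X m)) := by simp only [mul_assoc]
      _ = ((star (α X m) * β Y n) * sc (g X Y)) * (α X m * star (α X m)) := by rw [w1]
      _ = (star (α X m) * β Y n) * (α X m * star (α X m)) * sc (g X Y) := by rw [scmove]
      _ = star (α X m) * ((β Y n * α X m) * star (α X m)) * sc (g X Y) := by simp only [mul_assoc]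
      _ = star (α X m) * ((g m n • (α X m * β Y n)) * star (α X m)) * sc (g X Y) := by rw [hba]
      _ = g m n • (star (α X m) * (α X m * (β Y n * star (α X m))) * sc (g X Y)) := by
          simp only [smul_mul_assoc, mul_smul_comm, mul_assoc]
      _ = g m n • (star (α X m) * (α X m * ((star (α X m) * β Y n) * sc (g X Y))) * sc (g X Y)) := by rw [w1]
      _ = g m n • ((star (α X m) * (α X m * star (α X m)) * β Y n) * sc (g X Y) * sc (g X Y)) := by
          simp only [mul_assoc]
  have P2 : β Y n * (star (α X m) * (star (β X m) * β X m))
      = (g X Y * g m n) • ((star (α X m) * (star (β X m) * β X m) * β Y n) * sc (g X Y)) := by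
    calc β Y n * (star (α X m) * (star (β X m) * β X m))
        = (β Y n * star (α X m)) * (star (β X m) * β X m) := by simp only [mul_assoc]
      _ = ((star (α X m) * β Y n) * sc (g X Y)) * (star (β X m) * β X m) := by rw [w1]
      _ = (star (α X m) * β Y n) * (star (β X m) * β X m) * sc (g X Y) := by rw [scmove]
      _ = star (α X m) * ((β Y n * star (β X m)) * β X m) * sc (g X Y) := by simp only [mul_assoc]
      _ = star (α X m) * (((g X Y * g m n) • (star (β X m) * β Y n)) * β X m) * sc (g X Y) := by rw [hbt]
      _ = (g X Y * g m n) • (star (α X m) * (star (β X m) * (β Y n * β X m)) * sc (g X Y)) := by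
          simp only [smul_mul_assoc, mul_smul_comm, mul_assoc]
      _ = (g X Y * g m n) • (star (α X m) * (star (β X m) * (β X m * β Y n)) * sc (g X Y)) := by rw [hbb]
      _ = (g X Y * g m n) • ((star (α X m) * (star (β X m) * β X m) * β Y n) * sc (g X Y)) := by
          simp only [mul_assoc]
  have main : (star (α X m) * β Y n) * sc (g X Y)
      = g m n • ((star (α X m) * (α X m * star (α X m)) * β Y n) * sc (g X Y) * sc (g X Y))
        - (g X Y * g m n) • (((star (α X m) * (star (β X m) * β X m) * β Y n) * sc q) * sc (g X Y)) := by
    calc (star (α X m) * β Y n) * sc (g X Y) = β Y n * star (α X m) := w1.symm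
    _ = β Y n * (star (α X m) * (α X m * star (α X m)) - star (α X m) * (star (β X m) * β X m) * sc q) := by
        rw [← X2star R hq1 X m]
    _ = β Y n * (star (α X m) * (α X m * star (α X m))) - (β Y n * (star (α X m) * (star (β X m) * β X m))) * sc q := by
        rw [mul_sub]; simp only [mul_assoc]
    _ = g m n • ((star (α X m) * (α X m * star (α X m)) * β Y n) * sc (g X Y) * sc (g X Y))
        - (g X Y * g m n) • (((star (α X m) * (star (β X m) * β X m) * β Y n) * sc (g X Y)) * sc q) := by
        rw [P1, P2, smul_mul_assoc]
    _ = g m n • ((star (α X m) * (α X m * star (α X m)) * β Y n) * sc (g X Y) * sc (g X Y))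
        - (g X Y * g m n) • (((star (α X m) * (star (β X m) * β X m) * β Y n) * sc q) * sc (g X Y)) := by
        have hsw : ∀ (a b : ℂ) (x : H), x * sc a * sc b = x * sc b * sc a := by
          intro a b x; rw [mul_assoc, mul_assoc, sc_mul, sc_mul, mul_comm a b]
        rw [hsw (g X Y) q]
  have main2 : star (α X m) * β Y n
      = g m n • ((star (α X m) * (α X m * star (α X m)) * β Y n) * sc (g X Y))
        - (g X Y * g m n) • ((star (α X m) * (star (β X m) * β X m) * β Y n) * sc q) := by
    apply sc_cancel (g_ne R X Y)
    rw [main, sub_mul, smul_mul_assoc, smul_mul_assoc]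
  have hu : star (α X m) * (α X m * star (α X m)) * β Y n
      = star (α X m) * β Y n + q • (star (α X m) * (star (β X m) * β X m) * β Y n) := by
    have h := f1q R hq1 X m (β Y n)
    rw [eq_sub_iff_add_eq] at h
    exact h.symm
  rw [hu] at main2
  rw [vscq R hq1 X m (β Y n)] at main2
  have vd := v_scd R hq1 X Y m (β Y n)
  calc star (α X m) * β Y n
      = g m n • ((star (α X m) * β Y n + q • (star (α X m) * (star (β X m) * β X m) * β Y n)) * sc (g X Y))
        - (g X Y * g m n) • (q • (star (α X m) * (star (β X m) * β X m) * β Y n)) := main2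
  _ = g m n • ((star (α X m) * β Y n) * sc (g X Y))
        + (g m n * (q * (g X Y))) • (star (α X m) * (star (β X m) * β X m) * β Y n)
        - ((g X Y) * g m n * q) • (star (α X m) * (star (β X m) * β X m) * β Y n) := by
      rw [add_mul, smul_mul_assoc, smul_add, vd]
      module
  _ = g m n • ((star (α X m) * β Y n) * sc (g X Y)) := by
      rw [show g m n * (q * (g X Y)) = (g X Y) * g m n * q by ring, add_sub_cancel_right]

lemma v_cinv (hq1 : q ≠ 1) (X m n' : ι) (z : H) :
    (star (α X m) * (star (β X m) * β X m) * z) * sc ((g m n')⁻¹)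
      = (g m n')⁻¹ • (star (α X m) * (star (β X m) * β X m) * z) := by
  by_cases hmn : m = n'
  · subst hmn
    rw [g_diag R]
    have h := congrArg (· * sc q⁻¹) (vscq R hq1 X m z)
    simp only [smul_mul_assoc, mul_assoc, sc_mul, mul_inv_cancel₀ R.hq, sc_one, mul_one] at h
    have h2 : star (α X m) * (star (β X m) * β X m) * z = q • ((star (α X m) * (star (β X m) * β X m) * z) * sc q⁻¹) := by
      simp only [mul_assoc]
      exact h
    apply smul_cancel R.hq
    rw [← h2, smul_smul, mul_inv_cancel₀ R.hq, one_smul]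
  · rw [g_off R hmn, inv_one, sc_one, mul_one, one_smul]

lemma Fm2 (hq1 : q ≠ 1) (X Y m n : ι) :
    star (α X m) * star (β Y n) = (g X Y)⁻¹ • ((star (α X m) * star (β Y n)) * sc ((g m n)⁻¹)) := by
  have w2 : star (β Y n) * star (α X m) = (star (α X m) * star (β Y n)) * sc ((g m n)⁻¹) := by
    rw [R2 R X Y m n, mul_assoc]
  have scmove : ∀ x y : H, (x * sc ((g m n)⁻¹)) * y = (x * y) * sc ((g m n)⁻¹) := by
    intro x y; rw [mul_assoc, ← sc_comm, ← mul_assoc]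
  have hta : star (β Y n) * α X m = (g X Y)⁻¹ • (α X m * star (β Y n)) := h4' R X Y m n
  have htb : star (β Y n) * β X m = (g X Y * g m n)⁻¹ • (β X m * star (β Y n)) := h8' R X Y m n
  have htt : star (β Y n) * star (β X m) = star (β X m) * star (β Y n) := (R7 R X Y m n).symm
  have P1 : star (β Y n) * (star (α X m) * (α X m * star (α X m)))
      = (g X Y)⁻¹ • ((star (α X m) * (α X m * star (α X m)) * star (β Y n)) * sc ((g m n)⁻¹) * sc ((g m n)⁻¹)) := by
    calc star (β Y n) * (star (α X m) * (α X m * star (α X m)))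
        = (star (β Y n) * star (α X m)) * (α X m * star (α X m)) := by simp only [mul_assoc]
      _ = ((star (α X m) * star (β Y n)) * sc ((g m n)⁻¹)) * (α X m * star (α X m)) := by rw [w2]
      _ = (star (α X m) * star (β Y n)) * (α X m * star (α X m)) * sc ((g m n)⁻¹) := by rw [scmove]
      _ = star (α X m) * ((star (β Y n) * α X m) * star (α X m)) * sc ((g m n)⁻¹) := by simp only [mul_assoc]
      _ = star (α X m) * (((g X Y)⁻¹ • (α X m * star (β Y n))) * star (α X m)) * sc ((g m n)⁻¹) := by rw [hta]
      _ = (g X Y)⁻¹ • (star (α X m) * (α X m * (star (β Y n) * star (α X m))) * sc ((g m n)⁻¹)) := by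
          simp only [smul_mul_assoc, mul_smul_comm, mul_assoc]
      _ = (g X Y)⁻¹ • (star (α X m) * (α X m * ((star (α X m) * star (β Y n)) * sc ((g m n)⁻¹))) * sc ((g m n)⁻¹)) := by rw [w2]
      _ = (g X Y)⁻¹ • ((star (α X m) * (α X m * star (α X m)) * star (β Y n)) * sc ((g m n)⁻¹) * sc ((g m n)⁻¹)) := by
          simp only [mul_assoc]
  have P2 : star (β Y n) * (star (α X m) * (star (β X m) * β X m))
      = (g X Y * g m n)⁻¹ • ((star (α X m) * (star (β X m) * β X m) * star (β Y n)) * sc ((g m n)⁻¹)) := by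
    calc star (β Y n) * (star (α X m) * (star (β X m) * β X m))
        = (star (β Y n) * star (α X m)) * (star (β X m) * β X m) := by simp only [mul_assoc]
      _ = ((star (α X m) * star (β Y n)) * sc ((g m n)⁻¹)) * (star (β X m) * β X m) := by rw [w2]
      _ = (star (α X m) * star (β Y n)) * (star (β X m) * β X m) * sc ((g m n)⁻¹) := by rw [scmove]
      _ = star (α X m) * ((star (β Y n) * star (β X m)) * β X m) * sc ((g m n)⁻¹) := by simp only [mul_assoc]
      _ = star (α X m) * ((star (β X m) * star (β Y n)) * β X m) * sc ((g m n)⁻¹) := by rw [htt]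
      _ = star (α X m) * (star (β X m) * (star (β Y n) * β X m)) * sc ((g m n)⁻¹) := by simp only [mul_assoc]
      _ = star (α X m) * (star (β X m) * ((g X Y * g m n)⁻¹ • (β X m * star (β Y n)))) * sc ((g m n)⁻¹) := by rw [htb]
      _ = (g X Y * g m n)⁻¹ • ((star (α X m) * (star (β X m) * β X m) * star (β Y n)) * sc ((g m n)⁻¹)) := by
          simp only [smul_mul_assoc, mul_smul_comm, mul_assoc]
  have hsw : ∀ (a b : ℂ) (x : H), x * sc a * sc b = x * sc b * sc a := by
    intro a b x; rw [mul_assoc, mul_assoc, sc_mul, sc_mul, mul_comm a b]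
  have main : (star (α X m) * star (β Y n)) * sc ((g m n)⁻¹)
      = (g X Y)⁻¹ • ((star (α X m) * (α X m * star (α X m)) * star (β Y n)) * sc ((g m n)⁻¹) * sc ((g m n)⁻¹))
        - (g X Y * g m n)⁻¹ • (((star (α X m) * (star (β X m) * β X m) * star (β Y n)) * sc q) * sc ((g m n)⁻¹)) := by
    calc (star (α X m) * star (β Y n)) * sc ((g m n)⁻¹) = star (β Y n) * star (α X m) := w2.symm
    _ = star (β Y n) * (star (α X m) * (α X m * star (α X m)) - star (α X m) * (star (β X m) * β X m) * sc q) := by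
        rw [← X2star R hq1 X m]
    _ = star (β Y n) * (star (α X m) * (α X m * star (α X m))) - (star (β Y n) * (star (α X m) * (star (β X m) * β X m))) * sc q := by
        rw [mul_sub]; simp only [mul_assoc]
    _ = (g X Y)⁻¹ • ((star (α X m) * (α X m * star (α X m)) * star (β Y n)) * sc ((g m n)⁻¹) * sc ((g m n)⁻¹))
        - (g X Y * g m n)⁻¹ • (((star (α X m) * (star (β X m) * β X m) * star (β Y n)) * sc ((g m n)⁻¹)) * sc q) := by
        rw [P1, P2, smul_mul_assoc]
    _ = (g X Y)⁻¹ • ((star (α X m) * (α X m * star (α X m)) * star (β Y n)) * sc ((g m n)⁻¹) * sc ((g m n)⁻¹))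
        - (g X Y * g m n)⁻¹ • (((star (α X m) * (star (β X m) * β X m) * star (β Y n)) * sc q) * sc ((g m n)⁻¹)) := by
        rw [hsw ((g m n)⁻¹) q]
  have main2 : star (α X m) * star (β Y n)
      = (g X Y)⁻¹ • ((star (α X m) * (α X m * star (α X m)) * star (β Y n)) * sc ((g m n)⁻¹))
        - (g X Y * g m n)⁻¹ • ((star (α X m) * (star (β X m) * β X m) * star (β Y n)) * sc q) := by
    apply sc_cancel (inv_ne_zero (g_ne R m n))
    rw [main, sub_mul, smul_mul_assoc, smul_mul_assoc]
  have hu : star (α X m) * (α X m * star (α X m)) * star (β Y n)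
      = star (α X m) * star (β Y n) + q • (star (α X m) * (star (β X m) * β X m) * star (β Y n)) := by
    have h := f1q R hq1 X m (star (β Y n))
    rw [eq_sub_iff_add_eq] at h
    exact h.symm
  rw [hu] at main2
  rw [vscq R hq1 X m (star (β Y n))] at main2
  have vd := v_cinv R hq1 X m n (star (β Y n))
  calc star (α X m) * star (β Y n)
      = (g X Y)⁻¹ • ((star (α X m) * star (β Y n) + q • (star (α X m) * (star (β X m) * β X m) * star (β Y n))) * sc ((g m n)⁻¹))
        - (g X Y * g m n)⁻¹ • (q • (star (α X m) * (star (β X m) * β X m) * star (β Y n))) := main2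
  _ = (g X Y)⁻¹ • ((star (α X m) * star (β Y n)) * sc ((g m n)⁻¹))
        + ((g X Y)⁻¹ * (q * (g m n)⁻¹)) • (star (α X m) * (star (β X m) * β X m) * star (β Y n))
        - ((g X Y * g m n)⁻¹ * q) • (star (α X m) * (star (β X m) * β X m) * star (β Y n)) := by
      rw [add_mul, smul_mul_assoc, smul_add, vd]
      module
  _ = (g X Y)⁻¹ • ((star (α X m) * star (β Y n)) * sc ((g m n)⁻¹)) := by
      rw [show (g X Y)⁻¹ * (q * (g m n)⁻¹) = (g X Y * g m n)⁻¹ * q by rw [mul_inv]; ring,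
          add_sub_cancel_right]

lemma V1B (hq1 : q ≠ 1) {X Y : ι} (hXY : X ≠ Y) (m : ι) :
    star (α X m) * β Y m = 0 := by
  have h := Fm R hq1 X Y m m
  rw [g_diag R, g_off R hXY, sc_one, mul_one] at h
  have h2 : (1 - q) • (star (α X m) * β Y m) = 0 := by
    rw [sub_smul, one_smul, ← h, sub_self]
  have h3 := congrArg ((1 - q)⁻¹ • ·) h2
  simpa [smul_smul, inv_mul_cancel₀ (sub_ne_zero.mpr (Ne.symm hq1))] using h3

lemma V1A (hq1 : q ≠ 1) {m n : ι} (hmn : m ≠ n) (X : ι) :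
    star (α X m) * β X n = 0 := by
  have h := Fm R hq1 X X m n
  rw [g_off R hmn, g_diag R, one_smul] at h
  exact eigen_kill hq1 h.symm

lemma DB (hq1 : q ≠ 1) (X m : ι) :
    (star (α X m) * β X m) * sc q = q⁻¹ • (star (α X m) * β X m) := by
  have h := Fm R hq1 X X m m
  rw [g_diag R, g_diag R] at h
  apply smul_cancel R.hq
  rw [← h, smul_smul, mul_inv_cancel₀ R.hq, one_smul]

lemma V2A (hq1 : q ≠ 1) {m n : ι} (hmn : m ≠ n) (X : ι) :
    star (α X m) * star (β X n) = 0 := by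
  have h := Fm2 R hq1 X X m n
  rw [g_off R hmn, g_diag R, inv_one, sc_one, mul_one] at h
  have h2 : (1 - q⁻¹) • (star (α X m) * star (β X n)) = 0 := by
    rw [sub_smul, one_smul, ← h, sub_self]
  have h3 := congrArg ((1 - q⁻¹)⁻¹ • ·) h2
  have hne : (1 : ℂ) - q⁻¹ ≠ 0 := by
    rw [sub_ne_zero]
    intro hcon
    apply hq1
    rw [← inv_inv q, ← hcon, inv_one]
  simpa [smul_smul, inv_mul_cancel₀ hne] using h3

lemma V2B (hq1 : q ≠ 1) {X Y : ι} (hXY : X ≠ Y) (m : ι) :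
    star (α X m) * star (β Y m) = 0 := by
  have h := Fm2 R hq1 X Y m m
  rw [g_diag R, g_off R hXY, inv_one, one_smul] at h
  have hq1' : q⁻¹ ≠ 1 := by
    intro hcon
    apply hq1
    rw [← inv_inv q, hcon, inv_one]
  exact eigen_kill hq1' h.symm

lemma DT (hq1 : q ≠ 1) (X m : ι) :
    (star (α X m) * star (β X m)) * sc q⁻¹ = q • (star (α X m) * star (β X m)) := by
  have h := Fm2 R hq1 X X m m
  rw [g_diag R, g_diag R] at h
  apply smul_cancel (inv_ne_zero R.hq)
  rw [← h, smul_smul, inv_mul_cancel₀ R.hq, one_smul]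

end Core


section Assembly

variable {ι : Type*} [DecidableEq ι] {H₁ : Type*} [Ring H₁] [Algebra ℂ H₁] [StarRing H₁]
  {H₂ : Type*} [Ring H₂] [Algebra ℂ H₂] [StarRing H₂]

lemma smul_tmul_smul (c₁ c₂ : ℂ) (x : H₁) (y : H₂) :
    (c₁ • x) ⊗ₜ[ℂ] (c₂ • y) = (c₁ * c₂) • (x ⊗ₜ[ℂ] y) := by
  rw [TensorProduct.tmul_smul, TensorProduct.smul_tmul', smul_smul, mul_comm c₂ c₁,
      ← TensorProduct.smul_tmul']

lemma scal_ac {a b c : ℂ} (hb : b ≠ 0) : (a * b⁻¹) * (b * c⁻¹) = a * c⁻¹ := by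
  rw [mul_assoc, ← mul_assoc b⁻¹, inv_mul_cancel₀ hb, one_mul]

lemma scal_bd {a b c : ℂ} (hb : b ≠ 0) : (a * b) * (b * c)⁻¹ = a * c⁻¹ := by
  rw [mul_inv, mul_assoc, ← mul_assoc b, mul_inv_cancel₀ hb, one_mul]

variable {q : ℂ} {g : ι → ι → ℂ} {α₁ β₁ : ι → ι → H₁} {f₁ : ι → H₁}
  {α₂ β₂ : ι → ι → H₂} {f₂ : ι → H₂}

lemma ACt (R₁ : Rel q g α₁ β₁ f₁) (R₂ : Rel q g α₂ β₂ f₂) (p p' k l η μ : ι) :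
    (α₁ p η ⊗ₜ[ℂ] α₂ η k) * (star (α₁ p' μ) ⊗ₜ[ℂ] star (α₂ μ l))
      = (g p p' * (g k l)⁻¹) •
        ((star (α₁ p' μ) ⊗ₜ[ℂ] star (α₂ μ l)) * (α₁ p η ⊗ₜ[ℂ] α₂ η k)) := by
  rw [Algebra.TensorProduct.tmul_mul_tmul, Algebra.TensorProduct.tmul_mul_tmul,
      R₁.h2 p p' η μ, R₂.h2 η μ k l, smul_tmul_smul, scal_ac (g_ne R₁ η μ)]

lemma ADt (R₁ : Rel q g α₁ β₁ f₁) (R₂ : Rel q g α₂ β₂ f₂) (p p' k l η μ : ι) :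
    (α₁ p η ⊗ₜ[ℂ] α₂ η k) * (star (β₁ p' μ) ⊗ₜ[ℂ] β₂ μ l)
      = (g p p' * (g k l)⁻¹) •
        ((star (β₁ p' μ) ⊗ₜ[ℂ] β₂ μ l) * (α₁ p η ⊗ₜ[ℂ] α₂ η k)) := by
  rw [Algebra.TensorProduct.tmul_mul_tmul, Algebra.TensorProduct.tmul_mul_tmul,
      R₁.h4 p p' η μ, R₂.h3 η μ k l, smul_tmul_smul]

lemma BDt (R₁ : Rel q g α₁ β₁ f₁) (R₂ : Rel q g α₂ β₂ f₂) (p p' k l η μ : ι) :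
    (β₁ p η ⊗ₜ[ℂ] star (β₂ η k)) * (star (β₁ p' μ) ⊗ₜ[ℂ] β₂ μ l)
      = (g p p' * (g k l)⁻¹) •
        ((star (β₁ p' μ) ⊗ₜ[ℂ] β₂ μ l) * (β₁ p η ⊗ₜ[ℂ] star (β₂ η k))) := by
  rw [Algebra.TensorProduct.tmul_mul_tmul, Algebra.TensorProduct.tmul_mul_tmul,
      R₁.h8 p p' η μ, h8' R₂ μ η l k, smul_tmul_smul,
      g_symm R₂ μ η, g_symm R₂ l k, scal_bd (g_ne R₁ η μ)]

lemma BCt (R₁ : Rel q g α₁ β₁ f₁) (R₂ : Rel q g α₂ β₂ f₂) (p p' k l η μ : ι) :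
    (β₁ p η ⊗ₜ[ℂ] star (β₂ η k)) * (star (α₁ p' μ) ⊗ₜ[ℂ] star (α₂ μ l))
      = (g p p' * (g k l)⁻¹) •
        ((star (α₁ p' μ) ⊗ₜ[ℂ] star (α₂ μ l)) * (β₁ p η ⊗ₜ[ℂ] star (β₂ η k))) := by
  rw [Algebra.TensorProduct.tmul_mul_tmul, Algebra.TensorProduct.tmul_mul_tmul,
      R1 R₁ p' p μ η, R2 R₂ μ η l k]
  rcases eq_or_ne q 1 with hq1 | hq1
  · have g1 : ∀ x y : ι, g x y = 1 := by
      intro x y; rw [R₁.hg]; split <;> simp [hq1]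
    simp [g1, sc_one]
  · rcases eq_or_ne p p' with hpp | hpp
    · subst hpp
      rcases eq_or_ne η μ with hem | hem
      · subst hem
        rcases eq_or_ne k l with hkl | hkl
        · subst hkl
          rw [g_diag R₁, g_diag R₂, DB R₁ hq1 p η, DT R₂ hq1 η k,
              smul_tmul_smul, inv_mul_cancel₀ R₁.hq, mul_inv_cancel₀ R₁.hq, one_smul]
        · rw [V2A R₂ hq1 (fun hc => hkl hc.symm) η, zero_mul, TensorProduct.tmul_zero,
              TensorProduct.tmul_zero, smul_zero]
      · rw [V1A R₁ hq1 (fun hc => hem hc.symm) p, zero_mul, TensorProduct.zero_tmul,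
            TensorProduct.zero_tmul, smul_zero]
    · rcases eq_or_ne η μ with hem | hem
      · subst hem
        rw [V1B R₁ hq1 (fun hc => hpp hc.symm) η, zero_mul, TensorProduct.zero_tmul,
            TensorProduct.zero_tmul, smul_zero]
      · rcases eq_or_ne k l with hkl | hkl
        · subst hkl
          rw [V2B R₂ hq1 (fun hc => hem hc.symm) k, zero_mul, TensorProduct.tmul_zero,
              TensorProduct.tmul_zero, smul_zero]
        · rw [g_off R₁ (fun hc => hpp hc.symm), g_off R₁ hpp,
              g_off R₂ (fun hc => hkl hc.symm), g_off R₂ hkl]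
          simp [sc_one]

lemma block {M : Type*} [Ring M] [Module ℂ M] [SMulCommClass ℂ M M] [IsScalarTower ℂ M M]
    (c : ℂ) (F G : ι → M) (hF : (support F).Finite) (hG : (support G).Finite)
    (hterm : ∀ η μ, F η * G μ = c • (G μ * F η)) :
    (∑ᶠ η, F η) * (∑ᶠ μ, G μ) = c • ((∑ᶠ μ, G μ) * (∑ᶠ η, F η)) := by
  have hGF : (support fun η => (∑ᶠ μ, G μ) * F η).Finite :=
    hF.subset (fun η hη => by
      simp only [mem_support] at hη ⊢
      intro h0; exact hη (by rw [h0, mul_zero]))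
  rw [finsum_mul' _ _ hF, mul_finsum' _ _ hF, smul_finsum' c hGF]
  refine finsum_congr fun η => ?_
  have hGf : (support fun μ => G μ * F η).Finite :=
    hG.subset (fun μ hμ => by
      simp only [mem_support] at hμ ⊢
      intro h0; exact hμ (by rw [h0, zero_mul]))
  rw [mul_finsum' _ _ hG, finsum_mul' _ _ hG, smul_finsum' c hGf]
  exact finsum_congr fun μ => hterm η μ

lemma fin_tmul_left {A : ι → H₁} (hA : (support A).Finite) (Y : ι → H₂) :
    (support fun η => A η ⊗ₜ[ℂ] Y η).Finite :=
  hA.subset (fun η hη => by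
    simp only [mem_support] at hη ⊢
    intro h0; exact hη (by rw [h0, TensorProduct.zero_tmul]))

lemma fin_star {A : ι → H₁} (hA : (support A).Finite) :
    (support fun η => star (A η)).Finite :=
  hA.subset (fun η hη => by
    simp only [mem_support, ne_eq, star_eq_zero] at hη
    simpa using hη)

end Assembly

end Stmt4Aux


theorem stmt_4
    {ι : Type*} [DecidableEq ι] (q : ℂ) (hq : q ≠ 0)
    (g : ι → ι → ℂ) (hg : ∀ p p' : ι, g p p' = if p = p' then q else 1)
    {H₁ : Type*} [Ring H₁] [Algebra ℂ H₁] [StarRing H₁]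
    (α₁ β₁ : ι → ι → H₁) (f₁ : ι → H₁)
    (hAfin1 : ∀ p, (Function.support (α₁ p)).Finite)
    (hAfin2 : ∀ p, (Function.support (β₁ p)).Finite)
    (hA1 : ∀ p p' k l : ι, α₁ p k * α₁ p' l = α₁ p' l * α₁ p k)
    (hA2 : ∀ p p' k l : ι, α₁ p k * star (α₁ p' l) = (g p p' * (g k l)⁻¹) • (star (α₁ p' l) * α₁ p k))
    (hA3 : ∀ p p' k l : ι, α₁ p k * β₁ p' l = (g k l)⁻¹ • (β₁ p' l * α₁ p k))
    (hA4 : ∀ p p' k l : ι, α₁ p k * star (β₁ p' l) = g p p' • (star (β₁ p' l) * α₁ p k))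
    (hA5 : ∀ p p' k : ι, α₁ p k * f₁ p' = f₁ p' * α₁ p k)
    (hA6 : ∀ p p' k : ι, α₁ p k * star (f₁ p') = g p p' • (star (f₁ p') * α₁ p k))
    (hA7 : ∀ p p' k l : ι, β₁ p k * β₁ p' l = β₁ p' l * β₁ p k)
    (hA8 : ∀ p p' k l : ι, β₁ p k * star (β₁ p' l) = (g p p' * g k l) • (star (β₁ p' l) * β₁ p k))
    (hA9 : ∀ p p' k : ι, β₁ p k * f₁ p' = f₁ p' * β₁ p k)
    (hA10 : ∀ p p' k : ι, β₁ p k * star (f₁ p') = g p p' • (star (f₁ p') * β₁ p k))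
    (hA11 : ∀ p p' : ι, f₁ p * f₁ p' - f₁ p' * f₁ p = ∑ᶠ k, (α₁ p k * β₁ p' k - α₁ p' k * β₁ p k))
    (hA12 : ∀ p p' : ι, f₁ p * star (f₁ p') - g p p' • (star (f₁ p') * f₁ p)
        = (if p = p' then (1 : ℂ) else 0) • (1 : H₁) - (∑ᶠ k, α₁ p k * star (α₁ p' k))
          + g p p' • ∑ᶠ k, star (β₁ p' k) * β₁ p k)
    {H₂ : Type*} [Ring H₂] [Algebra ℂ H₂] [StarRing H₂]
    (α₂ β₂ : ι → ι → H₂) (f₂ : ι → H₂)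
    (hBfin1 : ∀ p, (Function.support (α₂ p)).Finite)
    (hBfin2 : ∀ p, (Function.support (β₂ p)).Finite)
    (hB1 : ∀ p p' k l : ι, α₂ p k * α₂ p' l = α₂ p' l * α₂ p k)
    (hB2 : ∀ p p' k l : ι, α₂ p k * star (α₂ p' l) = (g p p' * (g k l)⁻¹) • (star (α₂ p' l) * α₂ p k))
    (hB3 : ∀ p p' k l : ι, α₂ p k * β₂ p' l = (g k l)⁻¹ • (β₂ p' l * α₂ p k))
    (hB4 : ∀ p p' k l : ι, α₂ p k * star (β₂ p' l) = g p p' • (star (β₂ p' l) * α₂ p k))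
    (hB5 : ∀ p p' k : ι, α₂ p k * f₂ p' = f₂ p' * α₂ p k)
    (hB6 : ∀ p p' k : ι, α₂ p k * star (f₂ p') = g p p' • (star (f₂ p') * α₂ p k))
    (hB7 : ∀ p p' k l : ι, β₂ p k * β₂ p' l = β₂ p' l * β₂ p k)
    (hB8 : ∀ p p' k l : ι, β₂ p k * star (β₂ p' l) = (g p p' * g k l) • (star (β₂ p' l) * β₂ p k))
    (hB9 : ∀ p p' k : ι, β₂ p k * f₂ p' = f₂ p' * β₂ p k)
    (hB10 : ∀ p p' k : ι, β₂ p k * star (f₂ p') = g p p' • (star (f₂ p') * β₂ p k))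
    (hB11 : ∀ p p' : ι, f₂ p * f₂ p' - f₂ p' * f₂ p = ∑ᶠ k, (α₂ p k * β₂ p' k - α₂ p' k * β₂ p k))
    (hB12 : ∀ p p' : ι, f₂ p * star (f₂ p') - g p p' • (star (f₂ p') * f₂ p)
        = (if p = p' then (1 : ℂ) else 0) • (1 : H₂) - (∑ᶠ k, α₂ p k * star (α₂ p' k))
          + g p p' • ∑ᶠ k, star (β₂ p' k) * β₂ p k)
    (Dα Dβ Dαs Dβs : ι → ι → H₁ ⊗[ℂ] H₂) (Df Dfs : ι → H₁ ⊗[ℂ] H₂)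
    (hDα : ∀ p k : ι, Dα p k = (∑ᶠ η, α₁ p η ⊗ₜ[ℂ] α₂ η k) + ∑ᶠ η, β₁ p η ⊗ₜ[ℂ] star (β₂ η k))
    (hDβ : ∀ p k : ι, Dβ p k = (∑ᶠ η, α₁ p η ⊗ₜ[ℂ] β₂ η k) + ∑ᶠ η, β₁ p η ⊗ₜ[ℂ] star (α₂ η k))
    (hDf : ∀ p : ι, Df p = (∑ᶠ η, α₁ p η ⊗ₜ[ℂ] f₂ η) + (∑ᶠ η, β₁ p η ⊗ₜ[ℂ] star (f₂ η)) + f₁ p ⊗ₜ[ℂ] 1)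
    (hDαs : ∀ p k : ι, Dαs p k = (∑ᶠ η, star (α₁ p η) ⊗ₜ[ℂ] star (α₂ η k)) + ∑ᶠ η, star (β₁ p η) ⊗ₜ[ℂ] β₂ η k)
    (hDβs : ∀ p k : ι, Dβs p k = (∑ᶠ η, star (α₁ p η) ⊗ₜ[ℂ] star (β₂ η k)) + ∑ᶠ η, star (β₁ p η) ⊗ₜ[ℂ] α₂ η k)
    (hDfs : ∀ p : ι, Dfs p
        = (∑ᶠ η, star (α₁ p η) ⊗ₜ[ℂ] star (f₂ η)) + (∑ᶠ η, star (β₁ p η) ⊗ₜ[ℂ] f₂ η) + star (f₁ p) ⊗ₜ[ℂ] 1) :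
    ∀ p p' k l : ι, Dα p k * Dαs p' l = (g p p' * (g k l)⁻¹) • (Dαs p' l * Dα p k) := by
  intro p p' k l
  have R₁ : Stmt4Aux.Rel q g α₁ β₁ f₁ :=
    ⟨hq, hg, hAfin1, hAfin2, hA1, hA2, hA3, hA4, hA5, hA6, hA7, hA8, hA12⟩
  have R₂ : Stmt4Aux.Rel q g α₂ β₂ f₂ :=
    ⟨hq, hg, hBfin1, hBfin2, hB1, hB2, hB3, hB4, hB5, hB6, hB7, hB8, hB12⟩
  have hP1 : (Function.support fun η => α₁ p η ⊗ₜ[ℂ] α₂ η k).Finite :=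
    Stmt4Aux.fin_tmul_left (hAfin1 p) _
  have hP2 : (Function.support fun η => β₁ p η ⊗ₜ[ℂ] star (β₂ η k)).Finite :=
    Stmt4Aux.fin_tmul_left (hAfin2 p) _
  have hQ1 : (Function.support fun μ => star (α₁ p' μ) ⊗ₜ[ℂ] star (α₂ μ l)).Finite :=
    Stmt4Aux.fin_tmul_left (Stmt4Aux.fin_star (hAfin1 p')) _
  have hQ2 : (Function.support fun μ => star (β₁ p' μ) ⊗ₜ[ℂ] β₂ μ l).Finite :=
    Stmt4Aux.fin_tmul_left (Stmt4Aux.fin_star (hAfin2 p')) _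
  rw [hDα p k, hDαs p' l, add_mul, add_mul, mul_add, mul_add, mul_add, mul_add,
      smul_add, smul_add, smul_add]
  rw [Stmt4Aux.block (g p p' * (g k l)⁻¹) _ _ hP1 hQ1
        (fun η μ => Stmt4Aux.ACt R₁ R₂ p p' k l η μ),
      Stmt4Aux.block (g p p' * (g k l)⁻¹) _ _ hP1 hQ2
        (fun η μ => Stmt4Aux.ADt R₁ R₂ p p' k l η μ),
      Stmt4Aux.block (g p p' * (g k l)⁻¹) _ _ hP2 hQ1
        (fun η μ => Stmt4Aux.BCt R₁ R₂ p p' k l η μ),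
      Stmt4Aux.block (g p p' * (g k l)⁻¹) _ _ hP2 hQ2
        (fun η μ => Stmt4Aux.BDt R₁ R₂ p p' k l η μ)]
  abel
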